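/- Let φ : G → G′ be a morphism of simplicial groups which is a Kan fibration, let G act on X and G′ act on X′ with both orbit spaces X/G and X′/G′ discrete, and let f : X → X′ be φ-equivariant (f(g·x) = φ(g)·f(x)). Then f is a Kan fibration of simplicial sets. -/

import Mathlib

open CategoryTheory SSet Simplicial Opposite

/-- An action of a simplicial group `G` (a functor to `Grp`) on a simplicial
set `X`: levelwise group actions compatible with the simplicial operators. -/
structure SimplicialAction (G : SimplexCategoryᵒᵖ ⥤ GrpCat.{0}) (X : SSet.{0}) where
  act : ∀ n : SimplexCategoryᵒᵖ, ∀ _ : G.obj n, X.obj n → X.obj n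
  one_act : ∀ (n) (x : X.obj n), act n 1 x = x
  mul_act : ∀ (n) (g h : G.obj n) (x : X.obj n),
    act n (g * h) x = act n g (act n h x)
  naturality : ∀ {n m : SimplexCategoryᵒᵖ} (φ : n ⟶ m) (g : G.obj n) (x : X.obj n),
    X.map φ (act n g x) = act m (G.map φ g) (X.map φ x)

/-- The (iterated) degenerate simplex `s₀ⁿ(v)` of a vertex `v`, at an
arbitrary simplicial level. -/
def vtx (X : SSet.{0}) (v : X _⦋0⦌) (n : SimplexCategoryᵒᵖ) : X.obj n :=
  X.map (SimplexCategory.const n.unop (SimplexCategory.mk 0) 0).op v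

variable {G : SimplexCategoryᵒᵖ ⥤ GrpCat.{0}} {X : SSet.{0}}

/-- The orbit `Gv ⊆ X` of a vertex `v`, levelwise. -/
def orbitSet (A : SimplicialAction G X) (v : X _⦋0⦌) (n : SimplexCategoryᵒᵖ) :
    Set (X.obj n) :=
  {x | ∃ g : G.obj n, x = A.act n g (vtx X v n)}

/-- The stabilizer `G_v ⊆ G` of a vertex `v`, levelwise. -/
def stabSet (A : SimplicialAction G X) (v : X _⦋0⦌) (n : SimplexCategoryᵒᵖ) :
    Set (G.obj n) :=
  {g | A.act n g (vtx X v n) = vtx X v n}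

/-- The canonical degeneracy map `G_0 → G_n`. -/
def degMap (G : SimplexCategoryᵒᵖ ⥤ GrpCat.{0}) (n : SimplexCategoryᵒᵖ) :
    G.obj (op (SimplexCategory.mk 0)) → G.obj n :=
  G.map (SimplexCategory.const n.unop (SimplexCategory.mk 0) 0).op

/-- A map of simplicial sets is a *Kan fibration* if it has the right lifting
property with respect to all horn inclusions `Λ[n, i] ⟶ Δ[n]` (`n ≥ 1`). -/
def IsKanFibration {S T : SSet} (f : S ⟶ T) : Prop :=
  ∀ (n : ℕ) (i : Fin (n + 2)), HasLiftingProperty (Λ[n + 1, i].ι) f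

section Basics
variable {G : SimplexCategoryᵒᵖ ⥤ GrpCat.{0}} {X : SSet.{0}}

lemma act_inv (A : SimplicialAction G X) (n : SimplexCategoryᵒᵖ) (g : G.obj n) (x : X.obj n) :
    A.act n g⁻¹ (A.act n g x) = x := by
  rw [← A.mul_act, inv_mul_cancel, A.one_act]

lemma act_cancel (A : SimplicialAction G X) (n : SimplexCategoryᵒᵖ) (g h : G.obj n)
    (x y : X.obj n) (H : A.act n g x = A.act n h y) : x = A.act n (g⁻¹ * h) y := by
  rw [A.mul_act, ← H, act_inv]

lemma vtx_map {X : SSet.{0}} (v : X _⦋0⦌) {q q' : SimplexCategoryᵒᵖ} (ψ : q ⟶ q') :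
    X.map ψ (vtx X v q) = vtx X v q' := by
  have : (SimplexCategory.const q.unop (SimplexCategory.mk 0) 0).op ≫ ψ
      = (SimplexCategory.const q'.unop (SimplexCategory.mk 0) 0).op := by
    rw [← Quiver.Hom.op_unop (f := ψ), ← op_comp]
    exact congrArg Quiver.Hom.op (SimplexCategory.eq_const_to_zero _)
  rw [vtx, vtx, ← FunctorToTypes.map_comp_apply, this]

lemma vtx_zero {X : SSet.{0}} (v : X _⦋0⦌) : vtx X v (op (SimplexCategory.mk 0)) = v := by
  rw [vtx, show (SimplexCategory.const (SimplexCategory.mk 0) (SimplexCategory.mk 0) 0) = 𝟙 _ from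
    SimplexCategory.const_eq_id, op_id, FunctorToTypes.map_id_apply]

/-- deg of level-0 element acting on vtx -/
lemma act_vtx (A : SimplicialAction G X) (v : X _⦋0⦌) (g₀ : G.obj (op (SimplexCategory.mk 0)))
    (q : SimplexCategoryᵒᵖ) :
    A.act q (G.map (SimplexCategory.const q.unop (SimplexCategory.mk 0) 0).op g₀) (vtx X v q)
      = vtx X (A.act _ g₀ v) q := by
  have := A.naturality (SimplexCategory.const q.unop (SimplexCategory.mk 0) 0).op g₀ v
  rw [vtx, ← this]; rfl

end Basics



open CategoryTheory SSet Simplicial Opposite SimplexCategory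

namespace KanFill

variable (K : SimplexCategoryᵒᵖ ⥤ GrpCat.{0})

/-- A levelwise subgroup predicate closed under the simplicial operators. -/
structure SubgroupProp where
  P : ∀ q : SimplexCategoryᵒᵖ, ↑(K.obj q) → Prop
  one' : ∀ q, P q 1
  mul' : ∀ q a b, P q a → P q b → P q (a * b)
  inv' : ∀ q a, P q a → P q a⁻¹
  map' : ∀ {q q'} (ψ : q ⟶ q') (a), P q a → P q' (K.map ψ a)

/-- face operator, elementwise -/
def fd {m : ℕ} (j : Fin (m + 2)) (w : K.obj (op (SimplexCategory.mk (m + 1)))) :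
    K.obj (op (SimplexCategory.mk m)) :=
  K.map (SimplexCategory.δ j).op w

/-- degeneracy operator, elementwise -/
def fs {m : ℕ} (j : Fin (m + 1)) (w : K.obj (op (SimplexCategory.mk m))) :
    K.obj (op (SimplexCategory.mk (m + 1))) :=
  K.map (SimplexCategory.σ j).op w

variable {K}

lemma map_map {q q' q'' : SimplexCategoryᵒᵖ} (ψ : q ⟶ q') (ψ' : q' ⟶ q'')
    (a : K.obj q) : K.map ψ' (K.map ψ a) = K.map (ψ ≫ ψ') a := by
  rw [K.map_comp]; rfl

lemma fd_mul {m : ℕ} (j : Fin (m + 2)) (a b : K.obj (op (SimplexCategory.mk (m + 1)))) :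
    fd K j (a * b) = fd K j a * fd K j b := map_mul _ a b

lemma fd_inv {m : ℕ} (j : Fin (m + 2)) (a : K.obj (op (SimplexCategory.mk (m + 1)))) :
    fd K j a⁻¹ = (fd K j a)⁻¹ := map_inv _ a

lemma fs_mul {m : ℕ} (j : Fin (m + 1)) (a b : K.obj (op (SimplexCategory.mk m))) :
    fs K j (a * b) = fs K j a * fs K j b := map_mul _ a b

/-- first simplicial identity, elementwise -/
lemma fd_fd {m : ℕ} (a b : Fin (m + 2)) (hab : a ≤ b)
    (w : K.obj (op (SimplexCategory.mk (m + 2)))) :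
    fd K a (fd K b.succ w) = fd K b (fd K a.castSucc w) := by
  simp only [fd, map_map, ← op_comp, ← δ_comp_δ hab]

lemma fd_fs_self {m : ℕ} (j : Fin (m + 1)) (w : K.obj (op (SimplexCategory.mk m))) :
    fd K j.castSucc (fs K j w) = w := by
  rw [fd, fs, map_map, ← op_comp, δ_comp_σ_self, op_id, K.map_id]; rfl

lemma fd_fs_succ {m : ℕ} (j : Fin (m + 1)) (w : K.obj (op (SimplexCategory.mk m))) :
    fd K j.succ (fs K j w) = w := by
  rw [fd, fs, map_map, ← op_comp, δ_comp_σ_succ, op_id, K.map_id]; rfl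

lemma fd_fs_of_le {m : ℕ} (i : Fin (m + 2)) (j : Fin (m + 1)) (H : i ≤ j.castSucc)
    (w : K.obj (op (SimplexCategory.mk (m + 1)))) :
    fd K i.castSucc (fs K j.succ w) = fs K j (fd K i w) := by
  simp only [fd, fs, map_map, ← op_comp, δ_comp_σ_of_le H]

lemma fd_fs_of_gt {m : ℕ} (i : Fin (m + 2)) (j : Fin (m + 1)) (H : j.castSucc < i)
    (w : K.obj (op (SimplexCategory.mk (m + 1)))) :
    fd K i.succ (fs K j.castSucc w) = fs K j (fd K i w) := by
  simp only [fd, fs, map_map, ← op_comp, δ_comp_σ_of_gt H]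

/-- exchange lemma: `d_{i'} (d_j w) = d_a (d_u w)` when `i'.castSucc = u`, `a.succ = j`,
`i' ≤ a`. -/
lemma exch {p : ℕ} {u j : Fin (p + 3)} (i' a : Fin (p + 2)) (h1 : i'.castSucc = u)
    (h2 : a.succ = j) (hle : i' ≤ a)
    (w : K.obj (op (SimplexCategory.mk (p + 2)))) :
    fd K i' (fd K j w) = fd K a (fd K u w) := by
  subst h1; subst h2; exact fd_fd i' a hle w

end KanFill

namespace KanFill

open CategoryTheory SSet Simplicial Opposite SimplexCategory

variable {K : SimplexCategoryᵒᵖ ⥤ GrpCat.{0}}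

section Fill

variable (Q : SubgroupProp K) {p : ℕ} {S : Finset (Fin (p + 3))}
  {x : Fin (p + 3) → K.obj (op (SimplexCategory.mk (p + 1)))}

/-- the key "correction term lies in Q" computation -/
lemma midQ
    (compat : ∀ (a b : Fin (p + 2)), a ≤ b → a.castSucc ∈ S → b.succ ∈ S →
      Q.P _ ((fd K a (x b.succ))⁻¹ * fd K b (x a.castSucc)))
    (u j : Fin (p + 3)) (hu : u ∈ S) (hj : j ∈ S)
    (w : K.obj (op (SimplexCategory.mk (p + 2))))
    (hwj : Q.P _ ((x j)⁻¹ * fd K j w)) (i' : Fin (p + 2))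
    (hcase : (i'.castSucc = j ∧ j < u) ∨ (i'.succ = j ∧ u < j)) :
    Q.P _ (fd K i' ((fd K u w)⁻¹ * x u)) := by
  have hxw : fd K j w = x j * ((x j)⁻¹ * fd K j w) := by
    rw [mul_inv_cancel_left]
  rcases hcase with ⟨e1, hlt⟩ | ⟨e1, hlt⟩
  · -- j < u, j = i'.castSucc
    have hu1 : 1 ≤ u.1 := by omega
    set a : Fin (p + 2) := ⟨u.1 - 1, by have := u.2; omega⟩ with ha_def
    have ha : a.succ = u := by ext; simp [ha_def]; omega
    have hle : i' ≤ a := by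
      have : i'.1 = j.1 := by rw [← e1]; rfl
      simp only [Fin.le_def, ha_def]
      omega
    have e2 : fd K i' (fd K u w) = fd K a (fd K j w) := exch i' a e1 ha hle w
    have hc := compat i' a hle (e1 ▸ hj) (ha ▸ hu)
    rw [ha, e1] at hc
    have expand : fd K i' ((fd K u w)⁻¹ * x u) =
        (fd K a ((x j)⁻¹ * fd K j w))⁻¹ *
          ((fd K i' (x u))⁻¹ * fd K a (x j))⁻¹ := by
      rw [fd_mul, fd_inv, e2]
      rw [show fd K a (fd K j w) = fd K a (x j) * fd K a ((x j)⁻¹ * fd K j w) by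
        rw [← fd_mul, ← hxw]]
      group
    rw [expand]
    exact Q.mul' _ _ _ (Q.inv' _ _ (Q.map' _ _ hwj)) (Q.inv' _ _ hc)
  · -- u < j, j = i'.succ
    have ha2 : u.1 < p + 2 := by have := j.2; omega
    set a : Fin (p + 2) := ⟨u.1, ha2⟩ with ha_def
    have ha : a.castSucc = u := by ext; simp [ha_def]
    have hle : a ≤ i' := by
      have : i'.1 + 1 = j.1 := by rw [← e1]; simp
      simp only [Fin.le_def, ha_def]
      omega
    have e2 : fd K a (fd K j w) = fd K i' (fd K u w) := exch a i' ha e1 hle w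
    have hc := compat a i' hle (ha ▸ hu) (e1 ▸ hj)
    rw [ha, e1] at hc
    have expand : fd K i' ((fd K u w)⁻¹ * x u) =
        (fd K a ((x j)⁻¹ * fd K j w))⁻¹ *
          (((fd K a (x j))⁻¹ * fd K i' (x u))) := by
      rw [fd_mul, fd_inv, ← e2]
      rw [show fd K a (fd K j w) = fd K a (x j) * fd K a ((x j)⁻¹ * fd K j w) by
        rw [← fd_mul, ← hxw]]
      group
    rw [expand]
    exact Q.mul' _ _ _ (Q.inv' _ _ (Q.map' _ _ hwj)) hc

/-- one step of the Moore filling construction -/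
lemma step (P : SubgroupProp K)
    (compat : ∀ (a b : Fin (p + 2)), a ≤ b → a.castSucc ∈ S → b.succ ∈ S →
      Q.P _ ((fd K a (x b.succ))⁻¹ * fd K b (x a.castSucc)))
    (hxP : ∀ j ∈ S, P.P _ (x j))
    (T : Finset (Fin (p + 3))) (hTS : T ⊆ S) (r : Fin (p + 2)) (u : Fin (p + 3))
    (hu : u ∈ S) (hur : u = r.castSucc ∨ u = r.succ)
    (hoth : ∀ j ∈ T, j = r.castSucc ∨ j = r.succ → j = u)
    (w : K.obj (op (SimplexCategory.mk (p + 2)))) (hPw : P.P _ w)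
    (hw : ∀ j ∈ T, Q.P _ ((x j)⁻¹ * fd K j w)) :
    ∃ w', P.P _ w' ∧ ∀ j ∈ insert u T, Q.P _ ((x j)⁻¹ * fd K j w') := by
  set z := (fd K u w)⁻¹ * x u with hz
  refine ⟨w * fs K r z, ?_, ?_⟩
  · exact P.mul' _ _ _ hPw (P.map' _ _
      (P.mul' _ _ _ (P.inv' _ _ (P.map' _ _ hPw)) (hxP u hu)))
  · have hface : fd K u (w * fs K r z) = x u := by
      have hz' : fd K u (fs K r z) = z := by
        rcases hur with h | h
        · subst h; exact fd_fs_self r z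
        · subst h; exact fd_fs_succ r z
      rw [fd_mul, hz', hz, mul_inv_cancel_left]
    intro j hj
    rcases Finset.mem_insert.mp hj with rfl | hjT
    · rw [hface, inv_mul_cancel]; exact Q.one' _
    by_cases hju : j = u
    · subst hju; rw [hface, inv_mul_cancel]; exact Q.one' _
    have hj1 : j ≠ r.castSucc := fun h => hju (hoth j hjT (Or.inl h))
    have hj2 : j ≠ r.succ := fun h => hju (hoth j hjT (Or.inr h))
    have hv1 : j.1 ≠ r.1 := fun h => hj1 (by ext; simpa using h)
    have hv2 : j.1 ≠ r.1 + 1 := fun h => hj2 (by ext; simpa using h)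
    have huval : u.1 = r.1 ∨ u.1 = r.1 + 1 := by
      rcases hur with h | h <;> subst h <;> simp
    rcases lt_or_gt_of_ne hv1 with hlt | hgt
    · -- j.1 < r.1
      set i' : Fin (p + 2) := ⟨j.1, by omega⟩ with hi'
      set j'' : Fin (p + 1) := ⟨r.1 - 1, by have := r.2; omega⟩ with hj''
      have e1 : i'.castSucc = j := by ext; simp [hi']
      have e2 : j''.succ = r := by ext; simp [hj'']; omega
      have e3 : fd K j (fs K r z) = fs K j'' (fd K i' z) := by
        rw [← e1, ← e2]
        exact fd_fs_of_le i' j'' (by simp [Fin.le_def, hi', hj'']; omega) z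
      have hQz : Q.P _ (fd K i' z) :=
        midQ Q compat u j hu (hTS hjT) w (hw j hjT) i'
          (Or.inl ⟨e1, by rw [Fin.lt_def]; omega⟩)
      rw [fd_mul, e3, ← mul_assoc]
      exact Q.mul' _ _ _ (hw j hjT) (Q.map' _ _ hQz)
    · -- j.1 > r.1 + 1
      set i' : Fin (p + 2) := ⟨j.1 - 1, by have := j.2; omega⟩ with hi'
      set j'' : Fin (p + 1) := ⟨r.1, by have := j.2; omega⟩ with hj''
      have e1 : i'.succ = j := by ext; simp [hi']; omega
      have e2 : j''.castSucc = r := by ext; simp [hj'']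
      have e3 : fd K j (fs K r z) = fs K j'' (fd K i' z) := by
        rw [← e1, ← e2]
        exact fd_fs_of_gt i' j'' (by simp [Fin.lt_def, hi', hj'']; omega) z
      have hQz : Q.P _ (fd K i' z) :=
        midQ Q compat u j hu (hTS hjT) w (hw j hjT) i'
          (Or.inr ⟨e1, by rw [Fin.lt_def]; omega⟩)
      rw [fd_mul, e3, ← mul_assoc]
      exact Q.mul' _ _ _ (hw j hjT) (Q.map' _ _ hQz)

/-- the Moore filling construction, by induction on the set of prescribed faces -/
lemma fillAux (P : SubgroupProp K) (g : Fin (p + 3)) (hg : g ∉ S)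
    (compat : ∀ (a b : Fin (p + 2)), a ≤ b → a.castSucc ∈ S → b.succ ∈ S →
      Q.P _ ((fd K a (x b.succ))⁻¹ * fd K b (x a.castSucc)))
    (hxP : ∀ j ∈ S, P.P _ (x j)) :
    ∀ (c : ℕ) (T : Finset (Fin (p + 3))), T.card = c → T ⊆ S →
      ∃ w, P.P _ w ∧ ∀ j ∈ T, Q.P _ ((x j)⁻¹ * fd K j w) := by
  intro c
  induction c with
  | zero =>
    intro T hT _
    rw [Finset.card_eq_zero] at hT
    subst hT
    exact ⟨1, P.one' _, by simp⟩
  | succ c ih =>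
    intro T hT hTS
    have hne : T.Nonempty := by
      rw [← Finset.card_pos, hT]; omega
    have hgT : g ∉ T := fun h => hg (hTS h)
    by_cases hup : (T.filter (fun j => g < j)).Nonempty
    · -- remove the minimum of the part above the gap
      set F := T.filter (fun j => g < j) with hF
      set r := F.min' hup with hr
      have hrF : r ∈ F := F.min'_mem hup
      have hrT : r ∈ T := (Finset.mem_filter.mp hrF).1
      have hgr : g < r := (Finset.mem_filter.mp hrF).2
      have hgr' : g.1 < r.1 := hgr
      have hmin : ∀ j ∈ T, g < j → r ≤ j := fun j hj hgj =>
        Finset.min'_le _ j (Finset.mem_filter.mpr ⟨hj, hgj⟩)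
      set T' := T.erase r with hT'
      obtain ⟨w, hPw, hw⟩ := ih T' (by rw [hT', Finset.card_erase_of_mem hrT, hT]; rfl)
        ((Finset.erase_subset _ _).trans hTS)
      have hr1 : 1 ≤ r.1 := by omega
      set r' : Fin (p + 2) := ⟨r.1 - 1, by have := r.2; omega⟩ with hr'def
      have hru : r = r'.succ := by ext; simp [hr'def]; omega
      obtain ⟨w', hPw', hw'⟩ := step Q P compat hxP T'
        ((Finset.erase_subset _ _).trans hTS) r' r (hTS hrT) (Or.inr hru)
        (fun j hjT' hcase => by
          exfalso
          have hjr : j ≠ r := Finset.ne_of_mem_erase hjT'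
          have hjT : j ∈ T := Finset.mem_of_mem_erase hjT'
          rcases hcase with h | h
          · -- j.1 = r.1 - 1
            have hj : j.1 = r.1 - 1 := by rw [h]; simp [hr'def]
            rcases Nat.lt_trichotomy j.1 g.1 with h' | h' | h'
            · omega
            · exact hgT (by rwa [show j = g from Fin.ext h'] at hjT)
            · have := hmin j hjT (by rwa [Fin.lt_def])
              rw [Fin.le_def] at this
              omega
          · exact hjr (by rw [h, ← hru])) w hPw hw
      refine ⟨w', hPw', fun j hj => hw' j ?_⟩
      rw [hT', Finset.insert_erase hrT]
      exact hj
    · -- all of T is below the gap: remove the maximum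
      set r := T.max' hne with hr
      have hrT : r ∈ T := T.max'_mem hne
      have hmax : ∀ j ∈ T, j ≤ r := fun j hj => T.le_max' j hj
      have hbelow : ∀ j ∈ T, j < g := by
        intro j hj
        rcases lt_trichotomy j g with h | h | h
        · exact h
        · exact absurd (h ▸ hj) hgT
        · exact absurd ⟨j, Finset.mem_filter.mpr ⟨hj, h⟩⟩ hup
      have hrg : r < g := hbelow r hrT
      set T' := T.erase r with hT'
      obtain ⟨w, hPw, hw⟩ := ih T' (by rw [hT', Finset.card_erase_of_mem hrT, hT]; rfl)
        ((Finset.erase_subset _ _).trans hTS)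
      set r' : Fin (p + 2) := ⟨r.1, by have := g.2; have : r.1 < g.1 := hrg; omega⟩
        with hr'def
      have hru : r = r'.castSucc := by ext; simp [hr'def]
      obtain ⟨w', hPw', hw'⟩ := step Q P compat hxP T'
        ((Finset.erase_subset _ _).trans hTS) r' r (hTS hrT) (Or.inl hru)
        (fun j hjT' hcase => by
          exfalso
          have hjr : j ≠ r := Finset.ne_of_mem_erase hjT'
          have hjT : j ∈ T := Finset.mem_of_mem_erase hjT'
          rcases hcase with h | h
          · exact hjr (by rw [h, ← hru])
          · -- j = r + 1 > max
            have := hmax j hjT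
            rw [Fin.le_def] at this
            have hj : j.1 = r.1 + 1 := by rw [h]; simp [hr'def]
            omega) w hPw hw
      refine ⟨w', hPw', fun j hj => hw' j ?_⟩
      rw [hT', Finset.insert_erase hrT]
      exact hj

/-- Moore filling: fill a (partial, possibly-improper) horn in a simplicial group,
modulo `Q`, inside `P`. -/
lemma fillPartialMod (P : SubgroupProp K) {p : ℕ} (S : Finset (Fin (p + 3)))
    (x : Fin (p + 3) → K.obj (op (SimplexCategory.mk (p + 1))))
    (g : Fin (p + 3)) (hg : g ∉ S)
    (compat : ∀ (a b : Fin (p + 2)), a ≤ b → a.castSucc ∈ S → b.succ ∈ S →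
      Q.P _ ((fd K a (x b.succ))⁻¹ * fd K b (x a.castSucc)))
    (hxP : ∀ j ∈ S, P.P _ (x j)) :
    ∃ w, P.P _ w ∧ ∀ j ∈ S, Q.P _ ((x j)⁻¹ * fd K j w) :=
  fillAux Q P g hg compat hxP S.card S rfl le_rfl

end Fill

/-- filling a single prescribed face, at any level -/
lemma fillSingle (P : SubgroupProp K) {m : ℕ} (j : Fin (m + 2))
    (a : K.obj (op (SimplexCategory.mk m))) (ha : P.P _ a) :
    ∃ w, P.P _ w ∧ fd K j w = a := by
  by_cases h : j.1 < m + 1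
  · set k : Fin (m + 1) := ⟨j.1, h⟩ with hk
    have e : k.castSucc = j := by ext; simp [hk]
    exact ⟨fs K k a, P.map' _ _ ha, by rw [← e]; exact fd_fs_self k a⟩
  · set k : Fin (m + 1) := ⟨m, by omega⟩ with hk
    have e : k.succ = j := by ext; simp [hk]; have := j.2; omega
    exact ⟨fs K k a, P.map' _ _ ha, by rw [← e]; exact fd_fs_succ k a⟩

end KanFill


namespace HornMk

open CategoryTheory SSet Simplicial Opposite SimplexCategory

/-- evaluation of a map out of the standard simplex -/
lemma delta_eval {Y : SSet.{0}} {q : SimplexCategory} (g : stdSimplex.obj q ⟶ Y)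
    {m : SimplexCategory} (ψ : m ⟶ q) :
    g.app (op m) ((stdSimplex.objEquiv (n := q) (m := op m)).symm ψ) =
      Y.map ψ.op ((SSet.yonedaEquiv (X := Y) (n := q)) g) := by
  have := SSet.yonedaEquiv_symm_app_objEquiv_symm (SSet.yonedaEquiv g) ψ
  rwa [Equiv.symm_apply_apply] at this

lemma yonedaEquiv_comp {Y Z : SSet.{0}} {q : SimplexCategory}
    (g : stdSimplex.obj q ⟶ Y) (θ : Y ⟶ Z) :
    (SSet.yonedaEquiv (X := Z) (n := q)) (g ≫ θ) = θ.app _ ((SSet.yonedaEquiv (X := Y) (n := q)) g) := rfl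

end HornMk


section Preds

open CategoryTheory SSet Simplicial Opposite SimplexCategory KanFill

variable {G : SimplexCategoryᵒᵖ ⥤ GrpCat.{0}} {X : SSet.{0}}

/-- the stabilizer of (the degeneracies of) a vertex, as a subgroup predicate -/
def stabProp (A : SimplicialAction G X) (v : X _⦋0⦌) : SubgroupProp G where
  P q g := A.act q g (vtx X v q) = vtx X v q
  one' q := A.one_act q _
  mul' q a b ha hb := by
    show A.act q (a * b) (vtx X v q) = vtx X v q
    rw [A.mul_act]
    exact (congrArg (A.act q a) hb).trans ha
  inv' q a ha := by
    show A.act q a⁻¹ (vtx X v q) = vtx X v q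
    conv_lhs => rw [← ha]
    rw [act_inv]
  map' {q q'} ψ a ha := by
    show A.act q' (G.map ψ a) (vtx X v q') = vtx X v q'
    have h2 := A.naturality ψ a (vtx X v q)
    rw [ha, vtx_map] at h2
    exact h2.symm

/-- the trivial (full) subgroup predicate -/
def trivProp (G : SimplexCategoryᵒᵖ ⥤ GrpCat.{0}) : SubgroupProp G where
  P _ _ := True
  one' _ := trivial
  mul' _ _ _ _ _ := trivial
  inv' _ _ _ := trivial
  map' _ _ _ := trivial

/-- the trivial (identity) subgroup predicate -/
def exactProp (G : SimplexCategoryᵒᵖ ⥤ GrpCat.{0}) : SubgroupProp G where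
  P _ g := g = 1
  one' _ := rfl
  mul' _ a b ha hb := by
    show a * b = 1
    rw [ha, hb, mul_one]
  inv' _ a ha := by show a⁻¹ = 1; rw [ha, inv_one]
  map' ψ a ha := by show G.map ψ a = 1; rw [ha, map_one]

end Preds


section Key

open CategoryTheory SSet Simplicial Opposite SimplexCategory KanFill

lemma f_vtx {X X' : SSet.{0}} (f : X ⟶ X') (v : X _⦋0⦌) (q : SimplexCategoryᵒᵖ) :
    f.app q (vtx X v q) = vtx X' (f.app _ v) q := by
  rw [vtx, FunctorToTypes.naturality]; rfl

lemma phi_fd {G G' : SimplexCategoryᵒᵖ ⥤ GrpCat.{0}} (φ : G ⟶ G') {q q' : SimplexCategoryᵒᵖ}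
    (ψ : q ⟶ q') (y : G.obj q) :
    G'.map ψ (φ.app q y) = φ.app q' (G.map ψ y) := by
  have h : ∀ z, (G.map ψ ≫ φ.app q') z = (φ.app q ≫ G'.map ψ) z := fun z => by
    rw [φ.naturality ψ]
  have h2 := h y
  rw [comp_apply, comp_apply] at h2
  exact h2.symm

lemma act_vtx_map {G : SimplexCategoryᵒᵖ ⥤ GrpCat.{0}} {X : SSet.{0}}
    (A : SimplicialAction G X) (v : X _⦋0⦌) {q q' : SimplexCategoryᵒᵖ} (ψ : q ⟶ q')
    (g : G.obj q) :
    X.map ψ (A.act q g (vtx X v q)) = A.act q' (G.map ψ g) (vtx X v q') := by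
  rw [A.naturality, vtx_map]

lemma face_val {n : ℕ} (i j : Fin (n + 2)) (h : j ≠ i) :
    (horn.face i j h).1 = stdSimplex.objEquiv.symm (SimplexCategory.δ j) := rfl

lemma map_val {n m : ℕ} (i : Fin (n + 2)) (f : ⦋m⦌ ⟶ ⦋n⦌) (x : (Λ[n+1, i] : SSet) _⦋n⦌) :
    ((Λ[n+1, i] : SSet).map f.op x).1 = Δ[n+1].map f.op x.1 := rfl

lemma face_δ {p : ℕ} (i : Fin (p + 3)) (a b : Fin (p + 2)) (hab : a ≤ b)
    (ha : a.castSucc ≠ i) (hb : b.succ ≠ i) :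
    (Λ[p + 2, i] : SSet).map (SimplexCategory.δ a).op (horn.face i b.succ hb) =
      (Λ[p + 2, i] : SSet).map (SimplexCategory.δ b).op (horn.face i a.castSucc ha) := by
  apply Subtype.ext
  rw [map_val, map_val, face_val, face_val]
  exact congrArg stdSimplex.objEquiv.symm (δ_comp_δ hab)

lemma key {G G' : SimplexCategoryᵒᵖ ⥤ GrpCat.{0}} {X X' : SSet.{0}}
    (A : SimplicialAction G X) (A' : SimplicialAction G' X')
    (φ : G ⟶ G') (f : X ⟶ X')
    (hequiv : ∀ (q) (g : G.obj q) (xx : X.obj q),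
      f.app q (A.act q g xx) = A'.act q (φ.app q g) (f.app q xx))
    (n : ℕ) (i : Fin (n + 2)) (α : (Λ[n+1, i] : SSet) ⟶ X) (v : X _⦋0⦌) (fv : X' _⦋0⦌)
    (hfv : fv = f.app _ v)
    (h : Fin (n + 2) → G.obj (op (SimplexCategory.mk n)))
    (hh : ∀ (j) (hj : j ≠ i),
      A.act _ (h j) (vtx X v _) = α.app _ (SSet.horn.face i j hj))
    (g'' : G'.obj (op (SimplexCategory.mk (n + 1))))
    (hstab : ∀ (j) (hj : j ≠ i),
      A'.act _ ((G'.map (SimplexCategory.δ j).op g'')⁻¹ * φ.app _ (h j)) (vtx X' fv _)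
        = vtx X' fv _) :
    ∃ (Γ : G.obj (op (SimplexCategory.mk (n + 1))))
      (τ : G'.obj (op (SimplexCategory.mk (n + 1)))),
      (∀ (j : Fin (n + 2)) (hj : j ≠ i),
        A.act _ (G.map (SimplexCategory.δ j).op Γ) (vtx X v _)
          = α.app _ (SSet.horn.face i j hj)) ∧
      A'.act _ τ (vtx X' fv _) = vtx X' fv _ ∧
      ∀ (j : Fin (n + 2)) (hj : j ≠ i),
        G'.map (SimplexCategory.δ j).op (g'' * τ)
          = φ.app _ (G.map (SimplexCategory.δ j).op Γ) := by
  -- a general fact used in both cases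
  have phi_stab : ∀ (q : SimplexCategoryᵒᵖ) (s : G.obj q),
      A.act q s (vtx X v q) = vtx X v q →
      A'.act q (φ.app q s) (vtx X' fv q) = vtx X' fv q := by
    intro q s hs
    rw [hfv, ← f_vtx, ← hequiv, hs]
  cases n with
  | zero =>
    set j' : Fin 2 := ⟨1 - i.1, by omega⟩ with hj'def
    have hj' : j' ≠ i := by
      intro e
      have e2 : j'.1 = i.1 := congrArg Fin.val e
      have e3 : j'.1 = 1 - i.1 := rfl
      have e4 := i.2
      omega
    have huniq : ∀ j : Fin 2, j ≠ i → j = j' := by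
      intro j hj
      have h1 : j.1 ≠ i.1 := fun e => hj (Fin.ext e)
      have h2 := j.2
      have h3 := i.2
      ext
      show j.1 = 1 - i.1
      omega
    obtain ⟨Γ, -, hΓ⟩ := KanFill.fillSingle (trivProp G) j' (h j') trivial
    set t := (G'.map (SimplexCategory.δ j').op g'')⁻¹
        * φ.app _ (G.map (SimplexCategory.δ j').op Γ) with htdef
    have htstab : A'.act _ t (vtx X' fv _) = vtx X' fv _ := by
      rw [htdef]
      rw [show (G.map (SimplexCategory.δ j').op Γ) = h j' from hΓ]
      exact hstab j' hj'
    obtain ⟨τ, hτP, hτ⟩ := KanFill.fillSingle (stabProp A' fv) j' t htstab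
    refine ⟨Γ, τ, ?_, hτP, ?_⟩
    · intro j hj
      obtain rfl := huniq j hj
      rw [show (G.map (SimplexCategory.δ j').op Γ) = h j' from hΓ]
      exact hh j' hj
    · intro j hj
      obtain rfl := huniq j hj
      show KanFill.fd G' j' (g'' * τ) = _
      rw [KanFill.fd_mul, show KanFill.fd G' j' τ = t from hτ]
      show KanFill.fd G' j' g'' * ((KanFill.fd G' j' g'')⁻¹
          * φ.app _ (G.map (SimplexCategory.δ j').op Γ)) = _
      rw [mul_inv_cancel_left]
  | succ p =>
    have hmem : ∀ j : Fin (p + 3), j ∈ Finset.univ.erase i ↔ j ≠ i := by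
      intro j; simp [Finset.mem_erase]
    -- compatibility of the horn faces
    have xcompat : ∀ (a b : Fin (p + 2)), a ≤ b → ∀ (ha : a.castSucc ≠ i) (hb : b.succ ≠ i),
        X.map (SimplexCategory.δ a).op (α.app _ (horn.face i b.succ hb))
          = X.map (SimplexCategory.δ b).op (α.app _ (horn.face i a.castSucc ha)) := by
      intro a b hab ha hb
      rw [← FunctorToTypes.naturality, ← FunctorToTypes.naturality, face_δ i a b hab ha hb]
    -- compatibility of h modulo the stabilizer
    have hcomp : ∀ (a b : Fin (p + 2)), a ≤ b → a.castSucc ∈ Finset.univ.erase i →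
        b.succ ∈ Finset.univ.erase i →
        (stabProp A v).P _ ((fd G a (h b.succ))⁻¹ * fd G b (h a.castSucc)) := by
      intro a b hab hma hmb
      have ha := (hmem _).mp hma
      have hb := (hmem _).mp hmb
      have e1 : A.act _ (G.map (SimplexCategory.δ a).op (h b.succ)) (vtx X v _)
          = A.act _ (G.map (SimplexCategory.δ b).op (h a.castSucc)) (vtx X v _) := by
        rw [← act_vtx_map, ← act_vtx_map, hh _ hb, hh _ ha, xcompat a b hab ha hb]
      show A.act _ ((G.map (SimplexCategory.δ a).op (h b.succ))⁻¹
          * G.map (SimplexCategory.δ b).op (h a.castSucc)) (vtx X v _) = vtx X v _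
      rw [A.mul_act, ← e1, act_inv]
    obtain ⟨Γ, -, hΓ⟩ := KanFill.fillPartialMod (stabProp A v) (trivProp G)
      (Finset.univ.erase i) h i (by simp) hcomp (fun _ _ => trivial)
    have hΓh : ∀ (j : Fin (p + 3)) (hj : j ≠ i),
        G.map (SimplexCategory.δ j).op Γ = h j * ((h j)⁻¹ * fd G j Γ) := by
      intro j hj
      rw [mul_inv_cancel_left]
      rfl
    have hΓface : ∀ (j : Fin (p + 3)) (hj : j ≠ i),
        A.act _ (G.map (SimplexCategory.δ j).op Γ) (vtx X v _)
          = α.app _ (horn.face i j hj) := by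
      intro j hj
      have hq : A.act _ ((h j)⁻¹ * fd G j Γ) (vtx X v _) = vtx X v _ :=
        hΓ j ((hmem j).mpr hj)
      rw [hΓh j hj, A.mul_act, hq, hh j hj]
    -- now the correction τ
    set t : Fin (p + 3) → G'.obj (op (SimplexCategory.mk (p + 1))) := fun j =>
      (G'.map (SimplexCategory.δ j).op g'')⁻¹ * φ.app _ (G.map (SimplexCategory.δ j).op Γ)
      with htdef
    have htstab : ∀ j ∈ Finset.univ.erase i, (stabProp A' fv).P _ (t j) := by
      intro j hmj
      have hj := (hmem j).mp hmj
      have e : t j = ((G'.map (SimplexCategory.δ j).op g'')⁻¹ * φ.app _ (h j))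
          * φ.app _ ((h j)⁻¹ * fd G j Γ) := by
        rw [htdef]
        show _ = (G'.map (SimplexCategory.δ j).op g'')⁻¹
            * φ.app _ (h j) * φ.app _ ((h j)⁻¹ * fd G j Γ)
        rw [mul_assoc, ← map_mul, mul_inv_cancel_left]
        rfl
      show A'.act _ (t j) (vtx X' fv _) = vtx X' fv _
      rw [e]
      exact (stabProp A' fv).mul' _ _ _ (hstab j hj)
        (phi_stab _ _ (hΓ j ((hmem j).mpr hj)))
    have tcompat : ∀ (a b : Fin (p + 2)), a ≤ b → a.castSucc ∈ Finset.univ.erase i →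
        b.succ ∈ Finset.univ.erase i →
        (exactProp G').P _ ((fd G' a (t b.succ))⁻¹ * fd G' b (t a.castSucc)) := by
      intro a b hab _ _
      show (fd G' a (t b.succ))⁻¹ * fd G' b (t a.castSucc) = 1
      have e : fd G' a (t b.succ) = fd G' b (t a.castSucc) := by
        rw [htdef]
        show fd G' a ((fd G' b.succ g'')⁻¹ * φ.app _ (fd G b.succ Γ)) = _
        rw [fd_mul, fd_inv, fd_fd _ _ hab]
        rw [show fd G' a (φ.app _ (fd G b.succ Γ))
            = φ.app _ (fd G a (fd G b.succ Γ)) from phi_fd φ _ _]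
        rw [fd_fd _ _ hab]
        show _ = fd G' b ((fd G' a.castSucc g'')⁻¹ * φ.app _ (fd G a.castSucc Γ))
        rw [fd_mul, fd_inv]
        rw [show fd G' b (φ.app _ (fd G a.castSucc Γ))
            = φ.app _ (fd G b (fd G a.castSucc Γ)) from phi_fd φ _ _]
      rw [e, inv_mul_cancel]
    obtain ⟨τ, hτP, hτ⟩ := KanFill.fillPartialMod (exactProp G') (stabProp A' fv)
      (Finset.univ.erase i) t i (by simp) tcompat htstab
    refine ⟨Γ, τ, hΓface, hτP, ?_⟩
    intro j hj
    have he : t j = fd G' j τ := by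
      have := hτ j ((hmem j).mpr hj)
      rwa [show (exactProp G').P _ ((t j)⁻¹ * fd G' j τ)
          = ((t j)⁻¹ * fd G' j τ = 1) from rfl, inv_mul_eq_one] at this
    show fd G' j (g'' * τ) = φ.app _ (G.map (SimplexCategory.δ j).op Γ)
    rw [fd_mul, ← he, htdef]
    show fd G' j g'' * ((fd G' j g'')⁻¹ * _) = _
    rw [mul_inv_cancel_left]

end Key


/-!
STATEMENT 9: let `φ : G → G'` be a morphism of simplicial groups which is a
Kan fibration (on underlying simplicial sets), let `G` act on `X` and `G'`
act on `X'` with discrete orbit spaces, and let `f : X → X'` be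
`φ`-equivariant.  Then `f` is a Kan fibration. -/
theorem equivariant_map_isKanFibration
    {G G' : SimplexCategoryᵒᵖ ⥤ GrpCat.{0}} {X X' : SSet.{0}}
    (A : SimplicialAction G X) (A' : SimplicialAction G' X')
    (φ : G ⟶ G') (f : X ⟶ X')
    (hequiv : ∀ (n) (g : G.obj n) (x : X.obj n),
      f.app n (A.act n g x) = A'.act n (φ.app n g) (f.app n x))
    -- discreteness of `X/G`
    (hsurj : ∀ (n) (x : X.obj n), ∃ (v : X _⦋0⦌) (g : G.obj n),
      x = A.act n g (vtx X v n))
    (hinj : ∀ (v w : X _⦋0⦌) (n : SimplexCategoryᵒᵖ),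
      (∃ g : G.obj n, A.act n g (vtx X v n) = vtx X w n) →
      ∃ g₀, A.act (op (SimplexCategory.mk 0)) g₀
          (vtx X v (op (SimplexCategory.mk 0))) =
        vtx X w (op (SimplexCategory.mk 0)))
    -- discreteness of `X'/G'`
    (hsurj' : ∀ (n) (x : X'.obj n), ∃ (v : X' _⦋0⦌) (g : G'.obj n),
      x = A'.act n g (vtx X' v n))
    (hinj' : ∀ (v w : X' _⦋0⦌) (n : SimplexCategoryᵒᵖ),
      (∃ g : G'.obj n, A'.act n g (vtx X' v n) = vtx X' w n) →
      ∃ g₀, A'.act (op (SimplexCategory.mk 0)) g₀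
          (vtx X' v (op (SimplexCategory.mk 0))) =
        vtx X' w (op (SimplexCategory.mk 0)))
    -- `φ` is a Kan fibration
    (hφ : IsKanFibration (CategoryTheory.Functor.whiskerRight φ (forget GrpCat))) :
    IsKanFibration f := by
  intro n i
  constructor
  intro α β sq
  classical
  have hj₀ : (i.succAbove 0) ≠ i := Fin.succAbove_ne i 0
  set j₀ := i.succAbove 0 with hj₀def
  -- the faces of the horn, as a total function
  set x : Fin (n + 2) → X.obj (op (SimplexCategory.mk n)) := fun j =>
    if hj : j ≠ i then α.app _ (horn.face i j hj) else α.app _ (horn.face i j₀ hj₀)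
    with hxdef
  have hx : ∀ (j) (hj : j ≠ i), x j = α.app _ (horn.face i j hj) := fun j hj => dif_pos hj
  -- orbit data for each face
  choose vv gg hvg using fun j => hsurj (op (SimplexCategory.mk n)) (x j)
  set v := vv j₀ with hvdef
  -- vertex selection: for each j ≠ i a preimage of i under δ j
  have hkk : ∀ j : Fin (n + 2), j ≠ i → ∃ k : Fin (n + 1), j.succAbove k = i :=
    fun j hj => Fin.exists_succAbove_eq (Ne.symm hj)
  set kk : Fin (n + 2) → Fin (n + 1) := fun j =>
    if hj : j ≠ i then (hkk j hj).choose else 0 with hkkdef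
  have hkks : ∀ (j) (hj : j ≠ i), j.succAbove (kk j) = i := by
    intro j hj
    have : kk j = (hkk j hj).choose := by rw [hkkdef]; exact dif_pos hj
    rw [this]
    exact (hkk j hj).choose_spec
  set θ : Fin (n + 2) → (SimplexCategory.mk 0 ⟶ SimplexCategory.mk n) := fun j =>
    SimplexCategory.const _ _ (kk j) with hθdef
  -- δ composed with the vertex inclusion is the constant vertex i
  have hθδ : ∀ (j) (hj : j ≠ i),
      θ j ≫ SimplexCategory.δ j = SimplexCategory.const _ (SimplexCategory.mk (n+1)) i := by
    intro j hj
    rw [hθdef]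
    rw [SimplexCategory.const_comp]
    exact congrArg _ (hkks j hj)
  -- the vertices of all the faces agree
  have hvert : ∀ (j) (hj : j ≠ i), X.map (θ j).op (x j) = X.map (θ j₀).op (x j₀) := by
    intro j hj
    have ee : ∀ (j' : Fin (n + 2)) (hj' : j' ≠ i),
        (Λ[n+1, i] : SSet).map (θ j').op (horn.face i j' hj') =
          (Λ[n+1, i] : SSet).map (θ j₀).op (horn.face i j₀ hj₀) := by
      intro j' hj'
      apply Subtype.ext
      rw [map_val, map_val, face_val, face_val]
      exact congrArg stdSimplex.objEquiv.symm ((hθδ j' hj').trans (hθδ j₀ hj₀).symm)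
    rw [hx j hj, hx j₀ hj₀, ← FunctorToTypes.naturality, ← FunctorToTypes.naturality]
    rw [ee j hj]
  -- level-0 group elements
  set gz : Fin (n + 2) → G.obj (op (SimplexCategory.mk 0)) := fun j =>
    G.map (θ j).op (gg j) with hgzdef
  have hAct : ∀ (j) (hj : j ≠ i), A.act _ (gz j) (vv j) = X.map (θ j₀).op (x j₀) := by
    intro j hj
    rw [← hvert j hj, hvg j, act_vtx_map, vtx_zero]
  have hvvj : ∀ (j) (hj : j ≠ i), vv j = A.act _ ((gz j)⁻¹ * gz j₀) v :=
    fun j hj => act_cancel A _ _ _ _ _ ((hAct j hj).trans (hAct j₀ hj₀).symm)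
  -- translation elements at level n
  set h : Fin (n + 2) → G.obj (op (SimplexCategory.mk n)) := fun j =>
    gg j * G.map (SimplexCategory.const (SimplexCategory.mk n) (SimplexCategory.mk 0) 0).op
      ((gz j)⁻¹ * gz j₀) with hhdef
  have hhv : ∀ (j) (hj : j ≠ i),
      A.act _ (h j) (vtx X v _) = α.app _ (horn.face i j hj) := by
    intro j hj
    rw [← hx j hj, hvg j]
    show A.act _ (gg j * G.map (SimplexCategory.const (SimplexCategory.mk n)
      (SimplexCategory.mk 0) 0).op ((gz j)⁻¹ * gz j₀)) _ = _
    rw [A.mul_act, act_vtx A v ((gz j)⁻¹ * gz j₀) (op (SimplexCategory.mk n)),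
      ← hvvj j hj]
  -- the bottom simplex and its orbit data
  set b := (SSet.yonedaEquiv (X := X') (n := (SimplexCategory.mk (n+1)))) β with hbdef
  have hcomm : ∀ (j) (hj : j ≠ i),
      f.app _ (x j) = X'.map (SimplexCategory.δ j).op b := by
    intro j hj
    have hw := congrArg (fun t => t.app (op (SimplexCategory.mk n)) (horn.face i j hj)) sq.w
    beta_reduce at hw
    have h1 : (α ≫ f).app _ (horn.face i j hj) = f.app _ (α.app _ (horn.face i j hj)) := rfl
    have h2 : (Λ[n+1, i].ι ≫ β).app _ (horn.face i j hj)
        = β.app _ ((stdSimplex.objEquiv).symm (SimplexCategory.δ j)) := rfl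
    rw [h1, h2] at hw
    rw [hx j hj, hw]
    exact HornMk.delta_eval β (SimplexCategory.δ j)
  obtain ⟨w', g', hb'⟩ := hsurj' (op (SimplexCategory.mk (n+1))) b
  set fv := f.app (op (SimplexCategory.mk 0)) v with hfvdef
  set θβ : SimplexCategory.mk 0 ⟶ SimplexCategory.mk (n+1) :=
    SimplexCategory.const _ _ i with hθβdef
  have hTb : A'.act _ (G'.map θβ.op g') w' = A'.act _ (φ.app _ (gz j₀)) fv := by
    have l1 : X'.map θβ.op b = A'.act _ (G'.map θβ.op g') w' := by
      rw [hb', act_vtx_map, vtx_zero]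
    have l2 : X'.map θβ.op b = A'.act _ (φ.app _ (gz j₀)) fv := by
      rw [← hθδ j₀ hj₀]
      have l3 : X'.map ((θ j₀ ≫ SimplexCategory.δ j₀)).op b
          = X'.map (θ j₀).op (X'.map (SimplexCategory.δ j₀).op b) := by
        rw [op_comp, FunctorToTypes.map_comp_apply]
      rw [l3, ← hcomm j₀ hj₀, ← FunctorToTypes.naturality]
      rw [show X.map (θ j₀).op (x j₀) = A.act _ (gz j₀) (vv j₀) from (hAct j₀ hj₀).symm]
      rw [hequiv]
    rw [← l1, l2]
  have hw'v : w' = A'.act _ ((G'.map θβ.op g')⁻¹ * φ.app _ (gz j₀)) fv :=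
    act_cancel A' _ _ _ _ _ hTb
  set g'' := g' * G'.map (SimplexCategory.const (SimplexCategory.mk (n+1))
    (SimplexCategory.mk 0) 0).op ((G'.map θβ.op g')⁻¹ * φ.app _ (gz j₀)) with hg''def
  have hbv : A'.act _ g'' (vtx X' fv _) = b := by
    rw [hb']
    show A'.act _ (g' * G'.map (SimplexCategory.const (SimplexCategory.mk (n+1))
      (SimplexCategory.mk 0) 0).op ((G'.map θβ.op g')⁻¹ * φ.app _ (gz j₀))) _ = _
    rw [A'.mul_act, act_vtx A' fv ((G'.map θβ.op g')⁻¹ * φ.app _ (gz j₀))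
      (op (SimplexCategory.mk (n+1))), ← hw'v]
  have hstab : ∀ (j) (hj : j ≠ i),
      A'.act _ ((G'.map (SimplexCategory.δ j).op g'')⁻¹ * φ.app _ (h j)) (vtx X' fv _)
        = vtx X' fv _ := by
    intro j hj
    have e1 : A'.act _ (φ.app _ (h j)) (vtx X' fv _)
        = A'.act _ (G'.map (SimplexCategory.δ j).op g'') (vtx X' fv _) := by
      calc A'.act _ (φ.app _ (h j)) (vtx X' fv _)
          = f.app _ (A.act _ (h j) (vtx X v _)) := by
            rw [show vtx X' fv (op (SimplexCategory.mk n))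
              = f.app _ (vtx X v (op (SimplexCategory.mk n))) from (f_vtx f v _).symm,
              ← hequiv]
        _ = f.app _ (α.app _ (horn.face i j hj)) := by rw [hhv j hj]
        _ = f.app _ (x j) := by rw [hx j hj]
        _ = X'.map (SimplexCategory.δ j).op b := hcomm j hj
        _ = X'.map (SimplexCategory.δ j).op (A'.act _ g'' (vtx X' fv _)) := by rw [hbv]
        _ = A'.act _ (G'.map (SimplexCategory.δ j).op g'') (vtx X' fv _) :=
            act_vtx_map A' fv _ _
    rw [A'.mul_act, e1, act_inv]
  obtain ⟨Γ, τ, hΓface, hτstab, hfaces⟩ :=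
    key A A' φ f hequiv n i α v fv rfl h hhv g'' hstab
  -- the lifting square for φ
  set gf := g'' * τ with hgfdef
  set top : (Λ[n+1, i] : SSet) ⟶ (G ⋙ forget GrpCat) := Λ[n+1, i].ι ≫
    ((SSet.yonedaEquiv (X := (G ⋙ forget GrpCat)) (n := (SimplexCategory.mk (n+1))))).symm Γ with htopdef
  have sq2 : CommSq top (Λ[n+1, i].ι) (Functor.whiskerRight φ (forget GrpCat))
      (((SSet.yonedaEquiv (X := (G' ⋙ forget GrpCat)) (n := (SimplexCategory.mk (n+1))))).symm gf) := by
    constructor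
    apply horn.hom_ext
    intro j hj
    have d1 := HornMk.delta_eval (Y := G ⋙ forget GrpCat)
      (((SSet.yonedaEquiv (X := (G ⋙ forget GrpCat)) (n := (SimplexCategory.mk (n+1))))).symm Γ)
      (SimplexCategory.δ j)
    have d2 := HornMk.delta_eval (Y := G' ⋙ forget GrpCat)
      (((SSet.yonedaEquiv (X := (G' ⋙ forget GrpCat)) (n := (SimplexCategory.mk (n+1))))).symm gf)
      (SimplexCategory.δ j)
    rw [Equiv.apply_symm_apply] at d1
    rw [Equiv.apply_symm_apply] at d2
    show (Functor.whiskerRight φ (forget GrpCat)).app (op (SimplexCategory.mk n))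
        ((((SSet.yonedaEquiv (X := (G ⋙ forget GrpCat)) (n := (SimplexCategory.mk (n+1))))).symm Γ).app
          (op (SimplexCategory.mk n))
          ((stdSimplex.objEquiv (n := (SimplexCategory.mk (n+1))) (m := (op (SimplexCategory.mk n)))).symm (SimplexCategory.δ j)))
      = (((SSet.yonedaEquiv (X := (G' ⋙ forget GrpCat)) (n := (SimplexCategory.mk (n+1))))).symm gf).app
          (op (SimplexCategory.mk n))
          ((stdSimplex.objEquiv (n := (SimplexCategory.mk (n+1))) (m := (op (SimplexCategory.mk n)))).symm (SimplexCategory.δ j))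
    rw [d1, d2]
    exact (hfaces j hj).symm
  obtain ⟨⟨L, hL1, hL2⟩⟩ := ((hφ n i).sq_hasLift sq2).exists_lift
  set hh2 := (SSet.yonedaEquiv (X := (G ⋙ forget GrpCat)) (n := (SimplexCategory.mk (n+1)))) L with hh2def
  have hhface : ∀ (j : Fin (n + 2)) (hj : j ≠ i),
      G.map (SimplexCategory.δ j).op hh2 = G.map (SimplexCategory.δ j).op Γ := by
    intro j hj
    have hv := congrArg (fun t => t.app (op (SimplexCategory.mk n)) (horn.face i j hj)) hL1
    beta_reduce at hv
    have h1 : (Λ[n+1, i].ι ≫ L).app _ (horn.face i j hj)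
        = L.app (op (SimplexCategory.mk n))
            ((stdSimplex.objEquiv (n := (SimplexCategory.mk (n+1))) (m := (op (SimplexCategory.mk n)))).symm (SimplexCategory.δ j)) := rfl
    have h2 : top.app _ (horn.face i j hj)
        = (((SSet.yonedaEquiv (X := (G ⋙ forget GrpCat)) (n := (SimplexCategory.mk (n+1))))).symm Γ).app
            (op (SimplexCategory.mk n))
            ((stdSimplex.objEquiv (n := (SimplexCategory.mk (n+1))) (m := (op (SimplexCategory.mk n)))).symm (SimplexCategory.δ j)) := rfl
    have d1 := HornMk.delta_eval (Y := G ⋙ forget GrpCat) L (SimplexCategory.δ j)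
    have d2 := HornMk.delta_eval (Y := G ⋙ forget GrpCat)
      (((SSet.yonedaEquiv (X := (G ⋙ forget GrpCat)) (n := (SimplexCategory.mk (n+1))))).symm Γ)
      (SimplexCategory.δ j)
    rw [Equiv.apply_symm_apply] at d2
    rw [h1, h2, d1, d2] at hv
    exact hv
  have hφhh : φ.app _ hh2 = gf := by
    have hv := congrArg ((SSet.yonedaEquiv (X := (G' ⋙ forget GrpCat)) (n := (SimplexCategory.mk (n+1))))) hL2
    rw [HornMk.yonedaEquiv_comp, Equiv.apply_symm_apply] at hv
    exact hv
  set y := A.act _ hh2 (vtx X v (op (SimplexCategory.mk (n+1)))) with hydef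
  refine CommSq.HasLift.mk' ⟨((SSet.yonedaEquiv (X := X) (n := (SimplexCategory.mk (n+1))))).symm y, ?_, ?_⟩
  · -- upper triangle
    apply horn.hom_ext
    intro j hj
    have d1 := HornMk.delta_eval (Y := X)
      (((SSet.yonedaEquiv (X := X) (n := (SimplexCategory.mk (n+1))))).symm y) (SimplexCategory.δ j)
    rw [Equiv.apply_symm_apply] at d1
    show (((SSet.yonedaEquiv (X := X) (n := (SimplexCategory.mk (n+1))))).symm y).app
        (op (SimplexCategory.mk n))
        ((stdSimplex.objEquiv (n := (SimplexCategory.mk (n+1))) (m := (op (SimplexCategory.mk n)))).symm (SimplexCategory.δ j))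
      = α.app _ (horn.face i j hj)
    rw [d1, hydef, act_vtx_map, hhface j hj]
    exact hΓface j hj
  · -- lower triangle
    apply ((SSet.yonedaEquiv (X := X') (n := (SimplexCategory.mk (n+1))))).injective
    rw [HornMk.yonedaEquiv_comp, Equiv.apply_symm_apply]
    show f.app _ (A.act _ hh2 (vtx X v _)) = _
    rw [hequiv, f_vtx, hφhh]
    show A'.act _ (g'' * τ) (vtx X' fv _) = (SSet.yonedaEquiv (X := X') (n := _)) β
    rw [A'.mul_act, hτstab, hbv]
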